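/- Let r : ℝ → ℝ and β : ℝ → ℝ be continuous on [t_{i-1}, t_i], let P_i solve the linear ODE dP_i(t)/dt = (β(t) − 2r(t))P_i(t) with terminal value P_i(t_i) > 0, and let g_i solve dg_i(t)/dt = (β(t) − r(t))g_i(t) − ρ_i r(t) P_i(t) with terminal value g_i(t_i). Then for all t ∈ [t_{i-1}, t_i], g_i(t)/P_i(t) = (g_i(t_i)/P_i(t_i))·exp(−∫_t^{t_i} r(s) ds) + ρ_i·(1 − exp(−∫_t^{t_i} r(s) ds)). -/

import Mathlib

open Real

private lemma key_ode (a b : ℝ) (hab : a < b) (c f : ℝ → ℝ)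
    (hc : ContinuousOn c (Set.Icc a b))
    (hf : ∀ t ∈ Set.Icc a b, HasDerivAt f (c t * f t) t) :
    ∀ t ∈ Set.Icc a b, f t = f b * Real.exp (-(∫ s in t..b, c s)) := by
  set I : ℝ → ℝ := fun u => ∫ s in a..u, c s with hI
  have hcint : ∀ x y, x ∈ Set.Icc a b → y ∈ Set.Icc a b →
      IntervalIntegrable c MeasureTheory.volume x y := fun x y hx hy =>
    (hc.mono (Set.uIcc_subset_Icc hx hy)).intervalIntegrable
  have hIderiv : ∀ x ∈ Set.Ico a b, HasDerivWithinAt I (c x) (Set.Ici x) x := by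
    intro x hx
    have hx' : x ∈ Set.Icc a b := ⟨hx.1, hx.2.le⟩
    have hsub : Set.Ioc x b ⊆ Set.Icc a b := fun y hy => ⟨hx.1.trans hy.1.le, hy.2⟩
    have hnhds : nhdsWithin x (Set.Ioc x b) = nhdsWithin x (Set.Ioi x) :=
      nhdsWithin_Ioc_eq_nhdsGT hx.2
    have hmem : Set.Ioc x b ∈ nhdsWithin x (Set.Ioi x) := by
      rw [← hnhds]; exact self_mem_nhdsWithin
    have hmeas : StronglyMeasurableAtFilter c (nhdsWithin x (Set.Ioi x)) MeasureTheory.volume :=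
      ⟨Set.Ioc x b, hmem,
        ((hc.mono hsub).aestronglyMeasurable measurableSet_Ioc)⟩
    have hcw : ContinuousWithinAt c (Set.Ioi x) x := by
      have h1 : ContinuousWithinAt c (Set.Ioc x b) x :=
        ((hc x hx').mono hsub)
      unfold ContinuousWithinAt at h1 ⊢
      rwa [hnhds] at h1
    exact intervalIntegral.integral_hasDerivWithinAt_right
      (hcint a x ⟨le_rfl, hab.le⟩ hx') hmeas hcw
  have hfc : ContinuousOn f (Set.Icc a b) := fun x hx =>
    ((hf x hx).continuousAt).continuousWithinAt
  have hIc : ContinuousOn I (Set.Icc a b) := by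
    have hint : MeasureTheory.IntegrableOn c (Set.uIcc a b) MeasureTheory.volume := by
      rw [Set.uIcc_of_le hab.le]
      exact hc.integrableOn_Icc
    have := intervalIntegral.continuousOn_primitive_interval hint
    rwa [Set.uIcc_of_le hab.le] at this
  set F : ℝ → ℝ := fun u => f u * Real.exp (-(I u)) with hF
  have hFc : ContinuousOn F (Set.Icc a b) :=
    hfc.mul ((hIc.neg).rexp)
  have hFd : ∀ x ∈ Set.Ico a b, HasDerivWithinAt F 0 (Set.Ici x) x := by
    intro x hx
    have hx' : x ∈ Set.Icc a b := ⟨hx.1, hx.2.le⟩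
    have h1 : HasDerivWithinAt f (c x * f x) (Set.Ici x) x :=
      (hf x hx').hasDerivWithinAt
    have h2 : HasDerivWithinAt (fun u => Real.exp (-(I u)))
        (Real.exp (-(I x)) * (-(c x))) (Set.Ici x) x :=
      (((hIderiv x hx).neg).exp)
    have := h1.mul h2
    refine this.congr_deriv ?_
    ring
  have hconst := constant_of_has_deriv_right_zero hFc hFd
  intro t ht
  have h1 : F t = F a := hconst t ht
  have h2 : F b = F a := hconst b ⟨hab.le, le_rfl⟩
  have h3 : F t = F b := h1.trans h2.symm
  have hadd : I t + (∫ s in t..b, c s) = I b :=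
    intervalIntegral.integral_add_adjacent_intervals
      (hcint a t ⟨le_rfl, hab.le⟩ ht) (hcint t b ht ⟨hab.le, le_rfl⟩)
  have hexp : Real.exp (-(I t)) ≠ 0 := Real.exp_ne_zero _
  have : f t * Real.exp (-(I t)) = f b * Real.exp (-(I b)) := h3
  have hIb : I b = I t + (∫ s in t..b, c s) := hadd.symm
  rw [hIb] at this
  have h4 : f t * Real.exp (-(I t)) = f b * Real.exp (-(∫ s in t..b, c s)) * Real.exp (-(I t)) := by
    rw [this, neg_add, Real.exp_add]; ring
  exact mul_right_cancel₀ hexp h4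

theorem stmt_6 (a b ρ : ℝ) (hab : a < b) (r β : ℝ → ℝ)
    (hr : ContinuousOn r (Set.Icc a b)) (hβ : ContinuousOn β (Set.Icc a b))
    (P g : ℝ → ℝ)
    (hP : ∀ t ∈ Set.Icc a b, HasDerivAt P ((β t - 2 * r t) * P t) t)
    (hPb : 0 < P b)
    (hg : ∀ t ∈ Set.Icc a b,
      HasDerivAt g ((β t - r t) * g t - ρ * r t * P t) t) :
    ∀ t ∈ Set.Icc a b,
      g t / P t = (g b / P b) * exp (-(∫ s in t..b, r s))
        + ρ * (1 - exp (-(∫ s in t..b, r s))) := by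
  have hc2 : ContinuousOn (fun t => β t - 2 * r t) (Set.Icc a b) :=
    hβ.sub (continuousOn_const.mul hr)
  have hc1 : ContinuousOn (fun t => β t - r t) (Set.Icc a b) := hβ.sub hr
  have hPeq := key_ode a b hab (fun t => β t - 2 * r t) P hc2 hP
  have hheq := key_ode a b hab (fun t => β t - r t) (fun t => g t - ρ * P t) hc1 ?_
  · intro t ht
    have hrint : IntervalIntegrable r MeasureTheory.volume t b :=
      (hr.mono (Set.uIcc_subset_Icc ht ⟨hab.le, le_rfl⟩)).intervalIntegrable
    have hβint : IntervalIntegrable β MeasureTheory.volume t b :=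
      (hβ.mono (Set.uIcc_subset_Icc ht ⟨hab.le, le_rfl⟩)).intervalIntegrable
    have hPt := hPeq t ht
    have hht := hheq t ht
    have hPpos : 0 < P t := by
      rw [hPt]; positivity
    have hint1 : (∫ s in t..b, β s - r s) =
        (∫ s in t..b, β s) - ∫ s in t..b, r s :=
      intervalIntegral.integral_sub hβint hrint
    have hint2 : (∫ s in t..b, β s - 2 * r s) =
        (∫ s in t..b, β s) - 2 * ∫ s in t..b, r s := by
      rw [intervalIntegral.integral_sub hβint (hrint.const_mul 2),
        intervalIntegral.integral_const_mul]
    have key : g t - ρ * P t =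
        (g b - ρ * P b) * Real.exp (-(∫ s in t..b, β s - r s)) := hht
    have hPb' : P b ≠ 0 := ne_of_gt hPb
    have hPt' : P t ≠ 0 := ne_of_gt hPpos
    have hexprel : Real.exp (-(∫ s in t..b, β s - r s)) =
        Real.exp (-(∫ s in t..b, β s - 2 * r s)) * Real.exp (-(∫ s in t..b, r s)) := by
      rw [← Real.exp_add, hint1, hint2]; ring_nf
    have hgt : g t = ρ * P t + (g b - ρ * P b) * Real.exp (-(∫ s in t..b, β s - r s)) := by
      linarith [key]
    rw [hgt, hPt, hexprel]
    field_simp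
    ring
  · intro t ht
    have h1 := (hg t ht).sub ((hP t ht).const_mul ρ)
    refine h1.congr_deriv ?_
    ring
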